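/- There exist constants 0 < c ≤ C and a₀ ∈ (0,1) such that for every a ∈ (0, a₀), the largest eigenvalue of the logarithmic potential operator on the open disc D_a ⊂ ℝ² of radius a centered at the origin satisfies c · a² · |log a| ≤ λ₀(D_a) ≤ C · a² · |log a|. -/

import Mathlib

open MeasureTheory Real

noncomputable section

/-- Points of the plane. -/
abbrev Pt2 := EuclideanSpace ℝ (Fin 2)

/-- The logarithmic kernel `-(1/(2π)) log |x - y|` in dimension 2. -/
def logKernel (x y : Pt2) : ℝ := -(1 / (2 * π)) * Real.log (dist x y)

/-- The logarithmic potential operator `N_Ω`. -/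
def NOp (Ω : Set Pt2) (f : Pt2 → ℝ) (x : Pt2) : ℝ := ∫ y in Ω, logKernel x y * f y

/-- The quadratic form `⟨N_Ω u, u⟩` on `L²(Ω)`. -/
def quadForm (Ω : Set Pt2) (u : Lp ℝ 2 (volume.restrict Ω)) : ℝ :=
  ∫ x in Ω, NOp Ω u x * u x

/-- The `n`-th eigenvalue of the logarithmic potential operator, via the max–min principle:
`λ_n(Ω) = sup` over `(n+1)`-dimensional subspaces `Ξ` of `L²(Ω)` of
`inf` over nonzero `u ∈ Ξ` of `⟨N_Ω u, u⟩ / ‖u‖²`. -/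
def eigen2 (Ω : Set Pt2) (n : ℕ) : ℝ :=
  sSup {r : ℝ | ∃ Ξ : Submodule ℝ (Lp ℝ 2 (volume.restrict Ω)),
    Module.finrank ℝ ↥Ξ = n + 1 ∧
    r = sInf {q : ℝ | ∃ u ∈ Ξ, u ≠ 0 ∧ q = quadForm Ω u / ‖u‖ ^ 2}}

/-- The sandwich hypothesis: `Ω` is squeezed between two discs of radii comparable to `a`. -/
def Sandwich (c₁ c₂ a : ℝ) (Ω : Set Pt2) : Prop :=
  ∃ (z₁ z₂ : Pt2) (ρ₁ ρ₂ : ℝ),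
    c₁ * a ≤ ρ₁ ∧ ρ₁ ≤ c₂ * a ∧ c₁ * a ≤ ρ₂ ∧ ρ₂ ≤ c₂ * a ∧
    Metric.ball z₁ ρ₁ ⊆ Ω ∧ Ω ⊆ Metric.ball z₂ ρ₂

section Aux

open Set
open scoped NNReal ENNReal

lemma vol_ball (x : Pt2) (r : ℝ) (hr : 0 ≤ r) :
    volume (Metric.ball x r) = ENNReal.ofReal (π * r ^ 2) := by
  rw [EuclideanSpace.volume_ball]
  simp only [Fintype.card_fin]
  rw [show ((2:ℕ):ℝ)/2 + 1 = 2 by norm_num, Real.Gamma_two,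
    ← ENNReal.ofReal_pow hr, ← ENNReal.ofReal_mul (by positivity)]
  ring_nf
  rw [Real.sq_sqrt pi_nonneg]

lemma kernel_lintegral_bound {a : ℝ} (ha : 0 < a) (ha4 : a ≤ 1/4) {x : Pt2}
    (hx : x ∈ Metric.ball (0:Pt2) a) :
    ∫⁻ y in Metric.ball (0:Pt2) a, (‖logKernel x y‖₊ : ℝ≥0∞) ∂volume
      ≤ ENNReal.ofReal ((1/2 + 4*π) * (a^2 * |Real.log a|)) := by
  have hdist : ∀ y ∈ Metric.ball (0:Pt2) a, dist x y < 2 * a := by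
    intro y hy
    rw [Metric.mem_ball] at hx hy
    calc dist x y ≤ dist x 0 + dist 0 y := dist_triangle _ _ _
    _ < a + a := by rw [dist_comm 0 y]; exact add_lt_add hx hy
    _ = 2*a := by ring
  have hre : ∫⁻ y in Metric.ball (0:Pt2) a, (‖logKernel x y‖₊ : ℝ≥0∞) ∂volume
      = ∫⁻ y in Metric.ball (0:Pt2) a,
          ENNReal.ofReal ((1/(2*π)) * (-Real.log (dist x y))) ∂volume := by
    refine setLIntegral_congr_fun Metric.isOpen_ball.measurableSet ?_
    intro y hy
    have hly : Real.log (dist x y) ≤ 0 :=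
      Real.log_nonpos dist_nonneg (by linarith [hdist y hy, Metric.mem_ball.mp hx])
    beta_reduce
    rw [← enorm_eq_nnnorm, ← ofReal_norm]
    congr 1
    unfold logKernel
    rw [norm_mul, norm_neg, Real.norm_eq_abs, Real.norm_eq_abs,
      abs_of_nonneg (by positivity : (0:ℝ) ≤ 1/(2*π)), abs_of_nonpos hly]
  rw [hre]
  set Ω := Metric.ball (0:Pt2) a with hΩ
  set f : Pt2 → ℝ := fun y => (1/(2*π)) * (-Real.log (dist x y)) with hf
  have h2a0 : (0:ℝ) < 2*a := by linarith
  have h2a : 2*a ≤ 1/2 := by linarith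
  have h2pi : (0:ℝ) < 2*π := by positivity
  have hlog_nonpos : ∀ y ∈ Ω, Real.log (dist x y) ≤ 0 := fun y hy =>
    Real.log_nonpos dist_nonneg (by linarith [hdist y hy])
  have f_nn : 0 ≤ᵐ[volume.restrict Ω] f := by
    filter_upwards [ae_restrict_mem Metric.isOpen_ball.measurableSet] with y hy
    have := hlog_nonpos y hy
    exact mul_nonneg (by positivity) (by linarith)
  have f_mble : AEMeasurable f (volume.restrict Ω) :=
    (((Real.measurable_log.comp
      ((continuous_const.dist continuous_id).measurable)).neg).const_mul _).aemeasurable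
  rw [lintegral_eq_lintegral_meas_lt (volume.restrict Ω) f_nn f_mble]
  set T : ℝ := (1/(2*π)) * (-Real.log (2*a)) with hT
  have hlog2a : Real.log (2*a) < 0 := Real.log_neg h2a0 (by linarith)
  have hT0 : 0 < T := by
    apply mul_pos (by positivity); linarith
  rw [← Set.Ioc_union_Ioi_eq_Ioi hT0.le,
    lintegral_union measurableSet_Ioi Set.Ioc_disjoint_Ioi_same]
  have part1 : ∫⁻ t in Set.Ioc 0 T, (volume.restrict Ω) {y | t < f y} ∂volume
      ≤ ENNReal.ofReal (π * a^2) * ENNReal.ofReal T := by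
    calc ∫⁻ t in Set.Ioc 0 T, (volume.restrict Ω) {y | t < f y} ∂volume
        ≤ ∫⁻ _ in Set.Ioc 0 T, ENNReal.ofReal (π * a^2) ∂volume := by
          apply lintegral_mono_ae
          filter_upwards with t
          calc (volume.restrict Ω) {y | t < f y} ≤ (volume.restrict Ω) Set.univ :=
                measure_mono (Set.subset_univ _)
          _ = volume Ω := by rw [Measure.restrict_apply_univ]
          _ = ENNReal.ofReal (π * a^2) := vol_ball 0 a ha.le
    _ = ENNReal.ofReal (π * a^2) * ENNReal.ofReal T := by
        rw [setLIntegral_const, Real.volume_Ioc, sub_zero]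
  have part2 : ∫⁻ t in Set.Ioi T, (volume.restrict Ω) {y | t < f y} ∂volume
      ≤ ENNReal.ofReal (4 * π * a^2) := by
    have hsub : ∀ t, 0 < t → {y | t < f y} ⊆ Metric.ball x (Real.exp (-(2*π*t))) := by
      intro t ht y hy
      simp only [Set.mem_setOf_eq, hf] at hy
      have hlt : Real.log (dist x y) < -(2*π*t) := by
        have hdiv : (1:ℝ)/(2*π) * (-Real.log (dist x y))
            = (-Real.log (dist x y))/(2*π) := by ring
        rw [hdiv] at hy
        have := (lt_div_iff₀ h2pi).mp hy
        linarith
      rcases eq_or_lt_of_le (dist_nonneg : (0:ℝ) ≤ dist x y) with h0 | h0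
      · simp [Metric.mem_ball, dist_comm, ← h0, Real.exp_pos]
      · rw [Metric.mem_ball, dist_comm]
        exact (Real.log_lt_iff_lt_exp h0).mp hlt
    calc ∫⁻ t in Set.Ioi T, (volume.restrict Ω) {y | t < f y} ∂volume
        ≤ ∫⁻ t in Set.Ioi T,
            ENNReal.ofReal (π * Real.exp (-((4*π-1)*T)) * Real.exp (-t)) ∂volume := by
          apply lintegral_mono_ae
          filter_upwards [ae_restrict_mem measurableSet_Ioi] with t ht
          have ht' : T < t := ht
          calc (volume.restrict Ω) {y | t < f y}
              ≤ volume (Metric.ball x (Real.exp (-(2*π*t)))) :=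
                le_trans (Measure.restrict_apply_le _ _)
                  (measure_mono (hsub t (hT0.trans ht')))
          _ = ENNReal.ofReal (π * Real.exp (-(2*π*t)) ^ 2) :=
                vol_ball x _ (Real.exp_pos _).le
          _ ≤ ENNReal.ofReal (π * Real.exp (-((4*π-1)*T)) * Real.exp (-t)) := by
                apply ENNReal.ofReal_le_ofReal
                have e1 : Real.exp (-(2*π*t)) ^ 2
                    = Real.exp (-(2*π*t) + -(2*π*t)) := by rw [sq, Real.exp_add]
                have e2 : Real.exp (-((4*π-1)*T)) * Real.exp (-t)
                    = Real.exp (-((4*π-1)*T) + -t) := (Real.exp_add _ _).symm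
                have e3 : π * Real.exp (-((4*π-1)*T)) * Real.exp (-t)
                    = π * Real.exp (-((4*π-1)*T) + -t) := by
                  rw [mul_assoc, e2]
                rw [e3, e1]
                have hexp : Real.exp (-(2*π*t) + -(2*π*t))
                    ≤ Real.exp (-((4*π-1)*T) + -t) :=
                  Real.exp_le_exp.mpr (by nlinarith [Real.pi_gt_three])
                exact mul_le_mul_of_nonneg_left hexp Real.pi_pos.le
    _ ≤ ENNReal.ofReal (4 * π * a^2) := by
        have hint : ∫⁻ t in Set.Ioi T, ENNReal.ofReal (Real.exp (-t)) ∂volume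
            = ENNReal.ofReal (Real.exp (-T)) := by
          rw [← ofReal_integral_eq_lintegral_ofReal]
          · rw [integral_exp_neg_Ioi]
          · exact (by simpa using exp_neg_integrableOn_Ioi T one_pos : IntegrableOn (fun x => rexp (-x)) (Ioi T) volume)
          · filter_upwards with t using (Real.exp_pos _).le
        calc ∫⁻ t in Set.Ioi T,
              ENNReal.ofReal (π * Real.exp (-((4*π-1)*T)) * Real.exp (-t)) ∂volume
            = ENNReal.ofReal (π * Real.exp (-((4*π-1)*T))) *
                ENNReal.ofReal (Real.exp (-T)) := by
              rw [← hint, ← lintegral_const_mul' _ _ ENNReal.ofReal_ne_top]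
              congr 1; funext t
              rw [← ENNReal.ofReal_mul (by positivity)]
        _ = ENNReal.ofReal (π * Real.exp (-((4*π-1)*T)) * Real.exp (-T)) := by
              rw [← ENNReal.ofReal_mul (by positivity)]
        _ ≤ ENNReal.ofReal (4 * π * a^2) := by
              apply ENNReal.ofReal_le_ofReal
              rw [mul_assoc, ← Real.exp_add]
              have h2piT : Real.exp (-(2*π*T)) = 2*a := by
                have he : -(2*π*T) = Real.log (2*a) := by
                  rw [hT]; field_simp
                rw [he, Real.exp_log h2a0]
              have he2 : -((4*π-1)*T) + -T = -(2*π*T) + -(2*π*T) := by ring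
              rw [he2, Real.exp_add, h2piT]
              nlinarith [Real.pi_pos]
  calc _ ≤ ENNReal.ofReal (π * a^2) * ENNReal.ofReal T + ENNReal.ofReal (4 * π * a^2) :=
        add_le_add part1 part2
  _ ≤ ENNReal.ofReal ((1/2 + 4*π) * (a^2 * |Real.log a|)) := by
      rw [← ENNReal.ofReal_mul (by positivity),
        ← ENNReal.ofReal_add (by positivity) (by positivity)]
      apply ENNReal.ofReal_le_ofReal
      have hla : Real.log a < 0 := Real.log_neg ha (by linarith)
      have habs : |Real.log a| = -Real.log a := abs_of_neg hla
      have hπ : (0:ℝ) < π := Real.pi_pos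
      have hexp1 : Real.exp 1 < 4 := by
        have := Real.exp_one_lt_d9; linarith
      have hae : a ≤ Real.exp (-1) := by
        have h1 : a * Real.exp 1 ≤ 1 := by nlinarith [Real.exp_pos 1]
        calc a = a * Real.exp 1 / Real.exp 1 := by field_simp
        _ ≤ 1 / Real.exp 1 := by gcongr
        _ = Real.exp (-1) := by rw [Real.exp_neg, one_div]
      have hge1 : 1 ≤ -Real.log a := by
        have h := Real.log_le_log ha hae
        rw [Real.log_exp] at h
        linarith
      have hTle : T ≤ (1/(2*π)) * (-Real.log a) := by
        apply mul_le_mul_of_nonneg_left _ (by positivity)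
        have hl2 : Real.log (2*a) = Real.log 2 + Real.log a :=
          Real.log_mul two_ne_zero ha.ne'
        nlinarith [Real.log_pos (by norm_num : (1:ℝ) < 2)]
      rw [habs]
      have key2 : π*a^2*T ≤ π*a^2*((1/(2*π))*(-Real.log a)) :=
        mul_le_mul_of_nonneg_left hTle (by positivity)
      have keyeq : π*a^2*((1/(2*π))*(-Real.log a)) = (a^2/2)*(-Real.log a) := by
        field_simp
      have key : (0:ℝ) ≤ 4*π*a^2*(-Real.log a - 1) :=
        mul_nonneg (by positivity) (by linarith)
      nlinarith [key2, key, keyeq]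


lemma logKernel_symm (x y : Pt2) : logKernel x y = logKernel y x := by
  unfold logKernel; rw [dist_comm]

lemma measurable_logKernel : Measurable (fun p : Pt2 × Pt2 => logKernel p.1 p.2) := by
  unfold logKernel
  exact ((Real.measurable_log.comp measurable_dist).const_mul _)

lemma enn_amgm (p q : ℝ≥0) : (p:ℝ≥0∞) * q ≤ ((p:ℝ≥0∞)^2 + (q:ℝ≥0∞)^2)/2 := by
  have h : (p:ℝ)*q ≤ (((p:ℝ)^2+(q:ℝ)^2))/2 := by nlinarith [sq_nonneg ((p:ℝ)-(q:ℝ))]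
  calc (p:ℝ≥0∞) * q = ENNReal.ofReal ((p:ℝ)*q) := by
        rw [ENNReal.ofReal_mul p.coe_nonneg]
        simp [ENNReal.ofReal_coe_nnreal]
  _ ≤ ENNReal.ofReal (((p:ℝ)^2+(q:ℝ)^2)/2) := ENNReal.ofReal_le_ofReal h
  _ = ((p:ℝ≥0∞)^2 + (q:ℝ≥0∞)^2)/2 := by
      rw [ENNReal.ofReal_div_of_pos two_pos,
        ENNReal.ofReal_add (by positivity) (by positivity),
        ENNReal.ofReal_pow p.coe_nonneg, ENNReal.ofReal_pow q.coe_nonneg]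
      simp [ENNReal.ofReal_coe_nnreal, ENNReal.ofReal_ofNat]

/-- Schur-type bound for the quadratic form. -/
lemma schur_bound {a M : ℝ} (hM : 0 ≤ M)
    (hb : ∀ z ∈ Metric.ball (0:Pt2) a,
      ∫⁻ y in Metric.ball (0:Pt2) a, (‖logKernel z y‖₊ : ℝ≥0∞) ∂volume ≤ ENNReal.ofReal M)
    (u : Lp ℝ 2 (volume.restrict (Metric.ball (0:Pt2) a))) :
    |quadForm (Metric.ball (0:Pt2) a) u| ≤ M * ‖u‖^2 := by
  set g : Pt2 → ℝ≥0∞ := fun z => (‖u z‖₊ : ℝ≥0∞) with hg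
  have hgm : AEMeasurable g (volume.restrict (Metric.ball (0:Pt2) a)) := (Lp.aestronglyMeasurable u).enorm
  have hKm : Measurable (fun p : Pt2 × Pt2 => (‖logKernel p.1 p.2‖₊ : ℝ≥0∞)) :=
    measurable_logKernel.enorm
  set G : ℝ≥0∞ := ∫⁻ z, g z ^ 2 ∂(volume.restrict (Metric.ball (0:Pt2) a)) with hG
  -- identify G with the norm
  have hGnorm : G = ENNReal.ofReal (‖u‖^2) := by
    have h1 : eLpNorm u 2 (volume.restrict (Metric.ball (0:Pt2) a)) = (∫⁻ z, g z ^ (2:ℝ) ∂(volume.restrict (Metric.ball (0:Pt2) a))) ^ (1/(2:ℝ)) := by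
      rw [eLpNorm_eq_lintegral_rpow_enorm_toReal (by norm_num) (by norm_num)]
      norm_num
      rfl
    have h2 : G = (∫⁻ z, g z ^ (2:ℝ) ∂(volume.restrict (Metric.ball (0:Pt2) a))) := by
      apply lintegral_congr; intro z
      rw [← ENNReal.rpow_natCast (g z) 2]; norm_num
    have h3 : G = (eLpNorm u 2 (volume.restrict (Metric.ball (0:Pt2) a))) ^ (2:ℝ) := by
      rw [h1, ← ENNReal.rpow_mul, h2]
      norm_num
    rw [h3, Lp.norm_def, ENNReal.ofReal_pow ENNReal.toReal_nonneg,
      ENNReal.ofReal_toReal (Lp.eLpNorm_ne_top u),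
      show (2:ℝ) = ((2:ℕ):ℝ) by norm_num, ENNReal.rpow_natCast]
  have hGne : G ≠ ∞ := by
    rw [hGnorm]; exact ENNReal.ofReal_ne_top
  -- the symmetric kernel bound
  have hb' : ∀ z ∈ Metric.ball (0:Pt2) a, ∫⁻ x, (‖logKernel x z‖₊ : ℝ≥0∞) ∂(volume.restrict (Metric.ball (0:Pt2) a)) ≤ ENNReal.ofReal M := by
    intro z hz
    have : (fun x => (‖logKernel x z‖₊ : ℝ≥0∞)) = fun x => (‖logKernel z x‖₊ : ℝ≥0∞) := by
      funext x; rw [logKernel_symm]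
    rw [this]
    exact hb z hz
  -- step A
  have stepA : |quadForm (Metric.ball (0:Pt2) a) u| ≤
      (∫⁻ x, ENNReal.ofReal ‖NOp (Metric.ball (0:Pt2) a) u x * u x‖ ∂(volume.restrict (Metric.ball (0:Pt2) a))).toReal := by
    rw [← Real.norm_eq_abs]
    exact norm_integral_le_lintegral_norm _
  -- main estimate in ℝ≥0∞
  have key : (∫⁻ x, ENNReal.ofReal ‖NOp (Metric.ball (0:Pt2) a) u x * u x‖ ∂(volume.restrict (Metric.ball (0:Pt2) a)))
      ≤ ENNReal.ofReal M * G := by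
    have pt : ∀ x, ENNReal.ofReal ‖NOp (Metric.ball (0:Pt2) a) u x * u x‖
        ≤ (∫⁻ y, (‖logKernel x y‖₊ : ℝ≥0∞) * g y ∂(volume.restrict (Metric.ball (0:Pt2) a))) * g x := by
      intro x
      rw [ofReal_norm, enorm_eq_nnnorm, nnnorm_mul, ENNReal.coe_mul]
      apply mul_le_mul_left
      calc ((‖NOp (Metric.ball (0:Pt2) a) u x‖₊ : ℝ≥0∞)) ≤ ∫⁻ y, (‖logKernel x y * u y‖₊ : ℝ≥0∞) ∂(volume.restrict (Metric.ball (0:Pt2) a)) :=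
            enorm_integral_le_lintegral_enorm _
      _ = ∫⁻ y, (‖logKernel x y‖₊ : ℝ≥0∞) * g y ∂(volume.restrict (Metric.ball (0:Pt2) a)) := by
          apply lintegral_congr; intro y; rw [nnnorm_mul, ENNReal.coe_mul]
    have huncurry : AEMeasurable
        (fun p : Pt2 × Pt2 => (‖logKernel p.1 p.2‖₊ : ℝ≥0∞) * g p.2 * g p.1)
        ((volume.restrict (Metric.ball (0:Pt2) a)).prod (volume.restrict (Metric.ball (0:Pt2) a))) := ((hKm.aemeasurable.mul hgm.comp_snd).mul hgm.comp_fst)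
    calc ∫⁻ x, ENNReal.ofReal ‖NOp (Metric.ball (0:Pt2) a) u x * u x‖ ∂(volume.restrict (Metric.ball (0:Pt2) a))
        ≤ ∫⁻ x, (∫⁻ y, (‖logKernel x y‖₊ : ℝ≥0∞) * g y ∂(volume.restrict (Metric.ball (0:Pt2) a))) * g x ∂(volume.restrict (Metric.ball (0:Pt2) a)) :=
          lintegral_mono pt
    _ = ∫⁻ x, ∫⁻ y, (‖logKernel x y‖₊ : ℝ≥0∞) * g y * g x ∂(volume.restrict (Metric.ball (0:Pt2) a)) ∂(volume.restrict (Metric.ball (0:Pt2) a)) := by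
          apply lintegral_congr; intro x
          rw [lintegral_mul_const' _ _ ENNReal.coe_ne_top]
    _ = ∫⁻ p : Pt2 × Pt2, (‖logKernel p.1 p.2‖₊ : ℝ≥0∞) * g p.2 * g p.1 ∂((volume.restrict (Metric.ball (0:Pt2) a)).prod (volume.restrict (Metric.ball (0:Pt2) a))) :=
          lintegral_lintegral (f := fun x y => (‖logKernel x y‖₊ : ℝ≥0∞) * g y * g x)
            (by exact huncurry)
    _ ≤ ∫⁻ p : Pt2 × Pt2, ((‖logKernel p.1 p.2‖₊ : ℝ≥0∞) * g p.2 ^ 2) / 2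
          + ((‖logKernel p.1 p.2‖₊ : ℝ≥0∞) * g p.1 ^ 2) / 2 ∂((volume.restrict (Metric.ball (0:Pt2) a)).prod (volume.restrict (Metric.ball (0:Pt2) a))) := by
          apply lintegral_mono; intro p
          calc (‖logKernel p.1 p.2‖₊ : ℝ≥0∞) * g p.2 * g p.1
              ≤ (‖logKernel p.1 p.2‖₊ : ℝ≥0∞) * ((g p.2 ^2 + g p.1 ^2)/2) := by
                rw [mul_assoc]
                exact mul_le_mul_right (enn_amgm _ _) _
          _ = _ := by
                rw [← mul_div_assoc, mul_add, ENNReal.add_div]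
    _ ≤ ENNReal.ofReal M * G := by
          have hf1 : AEMeasurable
              (fun p : Pt2 × Pt2 => (‖logKernel p.1 p.2‖₊ : ℝ≥0∞) * g p.2 ^ 2)
              ((volume.restrict (Metric.ball (0:Pt2) a)).prod (volume.restrict (Metric.ball (0:Pt2) a))) := hKm.aemeasurable.mul (hgm.comp_snd.pow_const 2)
          have hf2 : AEMeasurable
              (fun p : Pt2 × Pt2 => (‖logKernel p.1 p.2‖₊ : ℝ≥0∞) * g p.1 ^ 2)
              ((volume.restrict (Metric.ball (0:Pt2) a)).prod (volume.restrict (Metric.ball (0:Pt2) a))) := hKm.aemeasurable.mul (hgm.comp_fst.pow_const 2)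
          have hI1 : ∫⁻ p : Pt2 × Pt2, (‖logKernel p.1 p.2‖₊ : ℝ≥0∞) * g p.2 ^ 2 ∂((volume.restrict (Metric.ball (0:Pt2) a)).prod (volume.restrict (Metric.ball (0:Pt2) a)))
              ≤ ENNReal.ofReal M * G := by
            rw [lintegral_prod_symm _ hf1]
            calc ∫⁻ y, ∫⁻ x, (‖logKernel x y‖₊ : ℝ≥0∞) * g y ^ 2 ∂(volume.restrict (Metric.ball (0:Pt2) a)) ∂(volume.restrict (Metric.ball (0:Pt2) a))
                ≤ ∫⁻ y, ENNReal.ofReal M * g y ^ 2 ∂(volume.restrict (Metric.ball (0:Pt2) a)) := by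
                  apply lintegral_mono_ae
                  filter_upwards [ae_restrict_mem Metric.isOpen_ball.measurableSet] with y hy
                  rw [lintegral_mul_const' _ _ (ENNReal.pow_ne_top ENNReal.coe_ne_top)]
                  exact mul_le_mul_left (hb' y hy) _
            _ = ENNReal.ofReal M * G := lintegral_const_mul' _ _ ENNReal.ofReal_ne_top
          have hI2 : ∫⁻ p : Pt2 × Pt2, (‖logKernel p.1 p.2‖₊ : ℝ≥0∞) * g p.1 ^ 2 ∂((volume.restrict (Metric.ball (0:Pt2) a)).prod (volume.restrict (Metric.ball (0:Pt2) a)))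
              ≤ ENNReal.ofReal M * G := by
            rw [lintegral_prod _ hf2]
            calc ∫⁻ x, ∫⁻ y, (‖logKernel x y‖₊ : ℝ≥0∞) * g x ^ 2 ∂(volume.restrict (Metric.ball (0:Pt2) a)) ∂(volume.restrict (Metric.ball (0:Pt2) a))
                ≤ ∫⁻ x, ENNReal.ofReal M * g x ^ 2 ∂(volume.restrict (Metric.ball (0:Pt2) a)) := by
                  apply lintegral_mono_ae
                  filter_upwards [ae_restrict_mem Metric.isOpen_ball.measurableSet] with x hx
                  rw [lintegral_mul_const' _ _ (ENNReal.pow_ne_top ENNReal.coe_ne_top)]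
                  exact mul_le_mul_left (hb x hx) _
            _ = ENNReal.ofReal M * G := lintegral_const_mul' _ _ ENNReal.ofReal_ne_top
          calc ∫⁻ p : Pt2 × Pt2, ((‖logKernel p.1 p.2‖₊ : ℝ≥0∞) * g p.2 ^ 2) / 2
                + ((‖logKernel p.1 p.2‖₊ : ℝ≥0∞) * g p.1 ^ 2) / 2 ∂((volume.restrict (Metric.ball (0:Pt2) a)).prod (volume.restrict (Metric.ball (0:Pt2) a)))
              = (∫⁻ p : Pt2 × Pt2, (‖logKernel p.1 p.2‖₊ : ℝ≥0∞) * g p.2 ^ 2 ∂((volume.restrict (Metric.ball (0:Pt2) a)).prod (volume.restrict (Metric.ball (0:Pt2) a)))) / 2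
                + (∫⁻ p : Pt2 × Pt2, (‖logKernel p.1 p.2‖₊ : ℝ≥0∞) * g p.1 ^ 2 ∂((volume.restrict (Metric.ball (0:Pt2) a)).prod (volume.restrict (Metric.ball (0:Pt2) a)))) / 2 := by
                simp only [div_eq_mul_inv]
                rw [lintegral_add_left' (hf1.mul_const _),
                  lintegral_mul_const' _ _ (by simp),
                  lintegral_mul_const' _ _ (by simp)]
          _ ≤ (ENNReal.ofReal M * G)/2 + (ENNReal.ofReal M * G)/2 :=
                add_le_add (ENNReal.div_le_div_right hI1 2) (ENNReal.div_le_div_right hI2 2)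
          _ = ENNReal.ofReal M * G := ENNReal.add_halves _
  calc |quadForm (Metric.ball (0:Pt2) a) u| ≤ (∫⁻ x, ENNReal.ofReal ‖NOp (Metric.ball (0:Pt2) a) u x * u x‖ ∂(volume.restrict (Metric.ball (0:Pt2) a))).toReal := stepA
  _ ≤ (ENNReal.ofReal M * G).toReal := by
      apply ENNReal.toReal_mono _ key
      exact ENNReal.mul_ne_top ENNReal.ofReal_ne_top hGne
  _ = M * ‖u‖^2 := by
      rw [hGnorm, ← ENNReal.ofReal_mul hM, ENNReal.toReal_ofReal (by positivity)]

set_option maxHeartbeats 2000000 in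
lemma eigen_bound_main {a : ℝ} (ha : 0 < a) (ha4 : a ≤ 1/4) :
    (1/4) * a^2 * |Real.log a| ≤ eigen2 (Metric.ball (0:Pt2) a) 0 ∧
    eigen2 (Metric.ball (0:Pt2) a) 0 ≤ (1/2 + 4*π) * a^2 * |Real.log a| := by
  haveI : IsFiniteMeasure (volume.restrict (Metric.ball (0:Pt2) a)) :=
    ⟨by rw [Measure.restrict_apply_univ]; exact measure_ball_lt_top⟩
  set M : ℝ := (1/2 + 4*π) * a^2 * |Real.log a| with hMdef
  have hM0 : 0 ≤ M := by positivity
  have hb : ∀ z ∈ (Metric.ball (0:Pt2) a), ∫⁻ y in (Metric.ball (0:Pt2) a), (‖logKernel z y‖₊ : ℝ≥0∞) ∂volume ≤ ENNReal.ofReal M := by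
    intro z hz
    rw [hMdef, show (1/2 + 4*π) * a^2 * |Real.log a| = (1/2 + 4*π) * (a^2 * |Real.log a|) by ring]
    exact kernel_lintegral_bound ha ha4 hz
  have hschur : ∀ u : Lp ℝ 2 (volume.restrict (Metric.ball (0:Pt2) a)), |quadForm (Metric.ball (0:Pt2) a) u| ≤ M * ‖u‖^2 :=
    fun u => schur_bound hM0 hb u
  have hdist : ∀ x ∈ (Metric.ball (0:Pt2) a), ∀ y ∈ (Metric.ball (0:Pt2) a), dist x y < 2*a := by
    intro x hx y hy
    rw [Metric.mem_ball] at hx hy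
    calc dist x y ≤ dist x 0 + dist 0 y := dist_triangle _ _ _
    _ < a + a := by rw [dist_comm 0 y]; exact add_lt_add hx hy
    _ = 2*a := by ring
  -- volume facts
  set V : ℝ := π * a^2 with hVdef
  have hV0 : 0 < V := by positivity
  have hVtoReal : (volume (Metric.ball (0:Pt2) a)).toReal = V := by
    rw [vol_ball 0 a ha.le, ENNReal.toReal_ofReal (by positivity)]
  -- the constant function in L²
  set u₀ : Lp ℝ 2 (volume.restrict (Metric.ball (0:Pt2) a)) := Lp.const 2 (volume.restrict (Metric.ball (0:Pt2) a)) (1:ℝ) with hu₀def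
  have hu₀norm : ‖u₀‖^2 = V := by
    have h1 : ‖u₀‖ = ((volume.restrict (Metric.ball (0:Pt2) a)) Set.univ).toReal ^ ((1:ℝ)/2) := by
      rw [hu₀def, Lp.norm_const' 2 _ (1:ℝ) two_ne_zero (by norm_num), measureReal_def]
      norm_num
    have h2 : ((volume.restrict (Metric.ball (0:Pt2) a)) Set.univ).toReal = V := by
      rw [Measure.restrict_apply_univ, hVtoReal]
    rw [h1, h2, ← Real.rpow_natCast (V ^ ((1:ℝ)/2)) 2, ← Real.rpow_mul hV0.le]
    norm_num
  have hu₀ne : u₀ ≠ 0 := by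
    intro h0
    have hz : ‖u₀‖^2 = 0 := by rw [h0]; simp
    rw [hu₀norm] at hz; linarith
  -- the averaged kernel
  set h : Pt2 → ℝ := fun x => ∫ y in (Metric.ball (0:Pt2) a), logKernel x y ∂volume with hhdef
  have hNOp : ∀ x, NOp (Metric.ball (0:Pt2) a) (⇑u₀) x = h x := by
    intro x
    unfold h
    unfold NOp
    apply integral_congr_ae
    filter_upwards [Lp.coeFn_const 2 (volume.restrict (Metric.ball (0:Pt2) a)) (1:ℝ)] with y hy
    rw [hu₀def, hy]
    simp [Function.const]
  set c₀ : ℝ := (1/(2*π)) * (-Real.log (2*a)) with hc₀def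
  have hlog2a : Real.log (2*a) < 0 := Real.log_neg (by linarith) (by linarith)
  have hc₀pos : 0 < c₀ := mul_pos (by positivity) (by linarith)
  have hKlower : ∀ x ∈ (Metric.ball (0:Pt2) a), ∀ y ∈ (Metric.ball (0:Pt2) a), y ≠ x → c₀ ≤ logKernel x y := by
    intro x hx y hy hne
    have hd0 : 0 < dist x y := dist_pos.mpr (Ne.symm hne)
    have hdlt : dist x y < 2*a := hdist x hx y hy
    have hlog := Real.log_le_log hd0 hdlt.le
    have hcoef : (0:ℝ) < 1/(2*π) := by positivity
    unfold logKernel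
    rw [hc₀def]
    nlinarith [mul_le_mul_of_nonneg_left hlog hcoef.le]
  have hint : ∀ x ∈ (Metric.ball (0:Pt2) a), IntegrableOn (fun y => logKernel x y) (Metric.ball (0:Pt2) a) volume := by
    intro x hx
    constructor
    · exact (measurable_logKernel.comp measurable_prodMk_left).aestronglyMeasurable
    · rw [HasFiniteIntegral]
      exact lt_of_le_of_lt (hb x hx) ENNReal.ofReal_lt_top
  have hinner : ∀ x ∈ (Metric.ball (0:Pt2) a), c₀ * V ≤ h x := by
    intro x hx
    have hsing : (volume.restrict (Metric.ball (0:Pt2) a)) {x} = 0 :=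
      le_antisymm ((Measure.restrict_apply_le _ _).trans_eq (measure_singleton x)) (by positivity)
    have hae : (fun _ : Pt2 => c₀) ≤ᵐ[volume.restrict (Metric.ball (0:Pt2) a)] fun y => logKernel x y := by
      filter_upwards [ae_restrict_mem Metric.isOpen_ball.measurableSet,
        measure_eq_zero_iff_ae_notMem.mp hsing] with y hy hyx
      exact hKlower x hx y hy (by simpa using hyx)
    calc c₀ * V = ∫ _ in (Metric.ball (0:Pt2) a), c₀ ∂volume := by
          rw [setIntegral_const, measureReal_def, hVtoReal, smul_eq_mul, mul_comm]
    _ ≤ h x := integral_mono_ae (integrable_const _) (hint x hx) hae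
  have hmeas : AEStronglyMeasurable h (volume.restrict (Metric.ball (0:Pt2) a)) := by
    have hsm : StronglyMeasurable (fun x => ∫ y,
        (fun p : Pt2 × Pt2 => logKernel p.1 p.2) (x, y) ∂(volume.restrict (Metric.ball (0:Pt2) a))) :=
      (measurable_logKernel.stronglyMeasurable).integral_prod_right'
    exact hsm.aestronglyMeasurable
  have hhbd : ∀ᵐ x ∂(volume.restrict (Metric.ball (0:Pt2) a)), ‖h x‖ ≤ M := by
    filter_upwards [ae_restrict_mem Metric.isOpen_ball.measurableSet] with x hx
    calc ‖h x‖ ≤ (∫⁻ y in (Metric.ball (0:Pt2) a), ENNReal.ofReal ‖logKernel x y‖ ∂volume).toReal :=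
          norm_integral_le_lintegral_norm _
    _ ≤ (ENNReal.ofReal M).toReal := by
        apply ENNReal.toReal_mono ENNReal.ofReal_ne_top
        calc ∫⁻ y in (Metric.ball (0:Pt2) a), ENNReal.ofReal ‖logKernel x y‖ ∂volume
            = ∫⁻ y in (Metric.ball (0:Pt2) a), (‖logKernel x y‖₊ : ℝ≥0∞) ∂volume := by
              apply lintegral_congr; intro y
              rw [ofReal_norm, enorm_eq_nnnorm]
        _ ≤ ENNReal.ofReal M := hb x hx
    _ = M := ENNReal.toReal_ofReal hM0
  have hhint : Integrable h (volume.restrict (Metric.ball (0:Pt2) a)) :=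
    Integrable.mono' (integrable_const M) hmeas hhbd
  have hquad : quadForm (Metric.ball (0:Pt2) a) u₀ = ∫ x in (Metric.ball (0:Pt2) a), h x ∂volume := by
    unfold quadForm
    apply integral_congr_ae
    filter_upwards [Lp.coeFn_const 2 (volume.restrict (Metric.ball (0:Pt2) a)) (1:ℝ)] with x hx
    rw [hNOp x, hu₀def, hx]
    simp [Function.const]
  have hquadlower : c₀ * V * V ≤ quadForm (Metric.ball (0:Pt2) a) u₀ := by
    rw [hquad]
    have haeo : (fun _ : Pt2 => c₀ * V) ≤ᵐ[volume.restrict (Metric.ball (0:Pt2) a)] h := by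
      filter_upwards [ae_restrict_mem Metric.isOpen_ball.measurableSet] with x hx
      exact hinner x hx
    calc c₀ * V * V = ∫ _ in (Metric.ball (0:Pt2) a), c₀ * V ∂volume := by
          rw [setIntegral_const, measureReal_def, hVtoReal, smul_eq_mul]; ring
    _ ≤ ∫ x in (Metric.ball (0:Pt2) a), h x ∂volume := integral_mono_ae (integrable_const _) hhint haeo
  -- the Rayleigh quotient of u₀
  set q₀ : ℝ := quadForm (Metric.ball (0:Pt2) a) u₀ / ‖u₀‖^2 with hq₀def
  have hq₀low : (1/4) * a^2 * |Real.log a| ≤ q₀ := by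
    have h1 : c₀ * V ≤ q₀ := by
      rw [hq₀def, hu₀norm, le_div_iff₀ hV0]
      exact hquadlower
    have hla : Real.log a < 0 := Real.log_neg ha (by linarith)
    have habs : |Real.log a| = -Real.log a := abs_of_neg hla
    have hlog2 : Real.log (2*a) = Real.log 2 + Real.log a :=
      Real.log_mul two_ne_zero ha.ne'
    have hla4 : Real.log a ≤ -(2 * Real.log 2) := by
      have hll := Real.log_le_log ha ha4
      rw [show (1:ℝ)/4 = 4⁻¹ by norm_num, Real.log_inv,
        show (4:ℝ) = 2^2 by norm_num, Real.log_pow] at hll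
      push_cast at hll
      linarith
    have hc₀V : c₀ * V = (a^2/2) * (-(Real.log 2 + Real.log a)) := by
      rw [hc₀def, hVdef, hlog2]
      field_simp
    have hkey : (1/4) * a^2 * |Real.log a| ≤ c₀ * V := by
      rw [habs, hc₀V]
      nlinarith [sq_nonneg a, Real.log_pos (by norm_num : (1:ℝ) < 2)]
    linarith
  -- the span of u₀ and its Rayleigh set
  have hrank : Module.finrank ℝ ↥(Submodule.span ℝ {u₀}) = 0 + 1 := by
    rw [finrank_span_singleton hu₀ne]
  have hSet : {q : ℝ | ∃ u ∈ Submodule.span ℝ {u₀}, u ≠ 0 ∧ q = quadForm (Metric.ball (0:Pt2) a) u / ‖u‖^2}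
      = {q₀} := by
    ext q
    constructor
    · rintro ⟨u, huΞ, hune, rfl⟩
      obtain ⟨cc, rfl⟩ := Submodule.mem_span_singleton.mp huΞ
      have hcc : cc ≠ 0 := by
        rintro rfl
        simp at hune
      have hNsm : ∀ x, NOp (Metric.ball (0:Pt2) a) (⇑(cc • u₀)) x = cc * NOp (Metric.ball (0:Pt2) a) (⇑u₀) x := by
        intro x
        unfold NOp
        rw [← integral_const_mul]
        apply integral_congr_ae
        filter_upwards [Lp.coeFn_smul cc u₀] with y hy
        rw [hy]
        simp only [Pi.smul_apply, smul_eq_mul]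
        ring
      have hquadsm : quadForm (Metric.ball (0:Pt2) a) (cc • u₀) = cc^2 * quadForm (Metric.ball (0:Pt2) a) u₀ := by
        unfold quadForm
        rw [← integral_const_mul]
        apply integral_congr_ae
        filter_upwards [Lp.coeFn_smul cc u₀] with x hx
        rw [hNsm x, hx]
        simp only [Pi.smul_apply, smul_eq_mul]
        ring
      have hnormsm : ‖cc • u₀‖^2 = cc^2 * ‖u₀‖^2 := by
        rw [norm_smul, Real.norm_eq_abs, mul_pow, sq_abs]
      simp only [Set.mem_singleton_iff, hq₀def, hquadsm, hnormsm]
      rw [mul_div_mul_left _ _ (pow_ne_zero 2 hcc)]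
    · rintro rfl
      exact ⟨u₀, Submodule.mem_span_singleton_self u₀, hu₀ne, rfl⟩
  have hq₀T : q₀ ∈ {r : ℝ | ∃ Ξ : Submodule ℝ (Lp ℝ 2 (volume.restrict (Metric.ball (0:Pt2) a))),
      Module.finrank ℝ ↥Ξ = 0 + 1 ∧
      r = sInf {q : ℝ | ∃ u ∈ Ξ, u ≠ 0 ∧ q = quadForm (Metric.ball (0:Pt2) a) u / ‖u‖ ^ 2}} :=
    ⟨Submodule.span ℝ {u₀}, hrank, by rw [hSet, csInf_singleton]⟩
  have hub : ∀ r ∈ {r : ℝ | ∃ Ξ : Submodule ℝ (Lp ℝ 2 (volume.restrict (Metric.ball (0:Pt2) a))),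
      Module.finrank ℝ ↥Ξ = 0 + 1 ∧
      r = sInf {q : ℝ | ∃ u ∈ Ξ, u ≠ 0 ∧ q = quadForm (Metric.ball (0:Pt2) a) u / ‖u‖ ^ 2}}, r ≤ M := by
    rintro r ⟨Ξ, hΞrank, rfl⟩
    have hne : Ξ ≠ ⊥ := by
      intro hbot
      rw [hbot, finrank_bot] at hΞrank
      exact absurd hΞrank (by norm_num)
    obtain ⟨u, huΞ, hune⟩ := (Submodule.ne_bot_iff Ξ).mp hne
    have hbdd : BddBelow {q : ℝ | ∃ u ∈ Ξ, u ≠ 0 ∧ q = quadForm (Metric.ball (0:Pt2) a) u / ‖u‖ ^ 2} := by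
      refine ⟨-M, ?_⟩
      rintro q ⟨v, _, hvne, rfl⟩
      have hvpos : 0 < ‖v‖^2 := pow_pos (norm_pos_iff.mpr hvne) 2
      rw [le_div_iff₀ hvpos]
      have habs := abs_le.mp (hschur v)
      linarith [habs.1]
    have hqu : quadForm (Metric.ball (0:Pt2) a) u / ‖u‖^2 ≤ M := by
      have hupos : 0 < ‖u‖^2 := pow_pos (norm_pos_iff.mpr hune) 2
      rw [div_le_iff₀ hupos]
      exact (abs_le.mp (hschur u)).2
    exact le_trans (csInf_le hbdd ⟨u, huΞ, hune, rfl⟩) hqu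
  have hbddT : BddAbove {r : ℝ | ∃ Ξ : Submodule ℝ (Lp ℝ 2 (volume.restrict (Metric.ball (0:Pt2) a))),
      Module.finrank ℝ ↥Ξ = 0 + 1 ∧
      r = sInf {q : ℝ | ∃ u ∈ Ξ, u ≠ 0 ∧ q = quadForm (Metric.ball (0:Pt2) a) u / ‖u‖ ^ 2}} :=
    ⟨M, fun r hr => hub r hr⟩
  constructor
  · calc (1/4) * a^2 * |Real.log a| ≤ q₀ := hq₀low
    _ ≤ eigen2 (Metric.ball (0:Pt2) a) 0 := by
        unfold eigen2
        exact le_csSup hbddT hq₀T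
  · show eigen2 (Metric.ball (0:Pt2) a) 0 ≤ M
    unfold eigen2
    exact csSup_le ⟨q₀, hq₀T⟩ hub

end Aux

/-- The largest eigenvalue of the logarithmic potential operator on the disc of radius `a`
centered at the origin is comparable to `a² |log a|`. -/
theorem eigen2_zero_disc_scaling :
    ∃ (c C a₀ : ℝ), 0 < c ∧ c ≤ C ∧ 0 < a₀ ∧ a₀ < 1 ∧
      ∀ a : ℝ, 0 < a → a < a₀ →
        c * a ^ 2 * |Real.log a| ≤ eigen2 (Metric.ball (0 : Pt2) a) 0 ∧
          eigen2 (Metric.ball (0 : Pt2) a) 0 ≤ C * a ^ 2 * |Real.log a| := by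
  refine ⟨1/4, 1/2 + 4*π, 1/4, by norm_num, by nlinarith [Real.pi_pos], by norm_num,
    by norm_num, ?_⟩
  intro a ha ha4
  exact eigen_bound_main ha ha4.le

end
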